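/- For nonzero η ∈ ℝ² and ξ ∈ ℝ² with ξ ≠ η, the null form bound |η₁(ξ-η)₂ - η₂(ξ-η)₁| / (|η| |ξ-η|) ≲ |ξ|^{1/2} (|η| + |ξ-η| - |ξ|)^{1/2} / (|η|^{1/2} |ξ-η|^{1/2}) holds. -/

import Mathlib

open Real

private lemma normsq_two (x : EuclideanSpace ℝ (Fin 2)) :
    ‖x‖ ^ 2 = x 0 ^ 2 + x 1 ^ 2 := by
  rw [EuclideanSpace.norm_eq, Real.sq_sqrt (by positivity)]
  simp [Fin.sum_univ_two, sq_abs]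

private lemma key_poly (a b c s q : ℝ) (ha : 0 < a) (hb : 0 < b) (hc : 0 ≤ c)
    (h1 : c ≤ a + b) (h2 : a ≤ c + b) (h3 : b ≤ c + a)
    (hlag : q ^ 2 + s ^ 2 = a ^ 2 * b ^ 2) (hcs : c ^ 2 = a ^ 2 + b ^ 2 + 2 * s) :
    q ^ 2 ≤ 4 * (a * b) * (c * (a + b - c)) := by
  have hz : 0 ≤ a + b - c := by linarith
  have hx : 0 ≤ c + a - b := by linarith
  have hy : 0 ≤ c + b - a := by linarith
  nlinarith [sq_nonneg q, mul_nonneg (mul_nonneg hx hy) hz,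
    mul_nonneg hx hy, mul_nonneg (mul_nonneg hz hz) (mul_nonneg hx hy),
    mul_nonneg hz (sq_nonneg (a - b)), mul_nonneg hz (sq_nonneg ((c+a-b) - (c+b-a))),
    mul_nonneg (mul_nonneg hz hz) (add_nonneg hx hy)]

private lemma abstract_bound (a b c z q : ℝ) (ha : 0 < a) (hb : 0 < b)
    (hc : 0 ≤ c) (hz : 0 ≤ z) (key : q ^ 2 ≤ 4 * (a * b) * (c * z)) :
    |q| / (a * b) ≤ 2 * (sqrt c * sqrt z / (sqrt a * sqrt b)) := by
  have key2 : |q| ≤ 2 * sqrt a * sqrt b * sqrt c * sqrt z := by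
    have e : (2 * sqrt a * sqrt b * sqrt c * sqrt z) ^ 2 = 4 * (a * b) * (c * z) := by
      rw [mul_pow, mul_pow, mul_pow, mul_pow, sq_sqrt ha.le, sq_sqrt hb.le,
        sq_sqrt hc, sq_sqrt hz]
      ring
    calc |q| = sqrt (q ^ 2) := (Real.sqrt_sq_eq_abs q).symm
    _ ≤ sqrt (4 * (a * b) * (c * z)) := Real.sqrt_le_sqrt key
    _ = 2 * sqrt a * sqrt b * sqrt c * sqrt z := by
        rw [← e, Real.sqrt_sq (by positivity)]
  have hab : 0 < a * b := mul_pos ha hb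
  rw [div_le_iff₀ hab]
  have ea : sqrt a * sqrt a = a := Real.mul_self_sqrt ha.le
  have eb : sqrt b * sqrt b = b := Real.mul_self_sqrt hb.le
  have hsa : 0 < sqrt a := Real.sqrt_pos.mpr ha
  have hsb : 0 < sqrt b := Real.sqrt_pos.mpr hb
  have e2 : 2 * (sqrt c * sqrt z / (sqrt a * sqrt b)) * (a * b)
      = 2 * sqrt a * sqrt b * sqrt c * sqrt z := by
    field_simp
    linear_combination (-(Real.sqrt c*Real.sqrt z*b))*ea - (Real.sqrt c*Real.sqrt z*Real.sqrt a*Real.sqrt a)*eb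
  rw [e2]
  exact key2

/-- Foschi–Klainerman elliptic null symbol bound: for η ≠ 0, ξ ≠ η in ℝ²,
|η₁(ξ-η)₂ - η₂(ξ-η)₁|/(|η||ξ-η|)
  ≲ |ξ|^(1/2) (|η|+|ξ-η|-|ξ|)^(1/2) / (|η|^(1/2)|ξ-η|^(1/2)). -/
theorem nullform_elliptic_bound :
    ∃ C : ℝ, 0 < C ∧ ∀ (η ξ : EuclideanSpace ℝ (Fin 2)), η ≠ 0 → ξ ≠ η →
      |η 0 * (ξ - η) 1 - η 1 * (ξ - η) 0| / (‖η‖ * ‖ξ - η‖) ≤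
        C * (Real.sqrt ‖ξ‖ * Real.sqrt (‖η‖ + ‖ξ - η‖ - ‖ξ‖)
          / (Real.sqrt ‖η‖ * Real.sqrt ‖ξ - η‖)) := by
  refine ⟨2, by norm_num, ?_⟩
  intro η ξ hη hξ
  have ha : (0:ℝ) < ‖η‖ := norm_pos_iff.mpr hη
  have hb : (0:ℝ) < ‖ξ - η‖ := norm_pos_iff.mpr (sub_ne_zero.mpr hξ)
  have hc : (0:ℝ) ≤ ‖ξ‖ := norm_nonneg _
  have hξeq : ξ = η + (ξ - η) := by abel
  have htri : ‖ξ‖ ≤ ‖η‖ + ‖ξ - η‖ := by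
    nth_rewrite 1 [hξeq]; exact norm_add_le _ _
  have htri2 : ‖η‖ ≤ ‖ξ‖ + ‖ξ - η‖ := by
    have : η = ξ - (ξ - η) := by abel
    nth_rewrite 1 [this]; exact norm_sub_le _ _
  have htri3 : ‖ξ - η‖ ≤ ‖ξ‖ + ‖η‖ := norm_sub_le _ _
  have hξ0 : ξ 0 = η 0 + (ξ - η) 0 := by simp
  have hξ1 : ξ 1 = η 1 + (ξ - η) 1 := by simp
  have hlag : (η 0 * (ξ - η) 1 - η 1 * (ξ - η) 0) ^ 2
      + (η 0 * (ξ - η) 0 + η 1 * (ξ - η) 1) ^ 2 = ‖η‖ ^ 2 * ‖ξ - η‖ ^ 2 := by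
    rw [normsq_two η, normsq_two (ξ - η)]; ring
  have hcs : ‖ξ‖ ^ 2 = ‖η‖ ^ 2 + ‖ξ - η‖ ^ 2
      + 2 * (η 0 * (ξ - η) 0 + η 1 * (ξ - η) 1) := by
    rw [normsq_two ξ, normsq_two η, normsq_two (ξ - η), hξ0, hξ1]; ring
  have key := key_poly ‖η‖ ‖ξ - η‖ ‖ξ‖ (η 0 * (ξ - η) 0 + η 1 * (ξ - η) 1)
    (η 0 * (ξ - η) 1 - η 1 * (ξ - η) 0) ha hb hc htri htri2 htri3 hlag hcs
  have hz : (0:ℝ) ≤ ‖η‖ + ‖ξ - η‖ - ‖ξ‖ := by linarith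
  have final := abstract_bound ‖η‖ ‖ξ - η‖ ‖ξ‖ (‖η‖ + ‖ξ - η‖ - ‖ξ‖)
    (η 0 * (ξ - η) 1 - η 1 * (ξ - η) 0) ha hb hc hz key
  exact final
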